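/- Let m > 0 and I0 ∈ (0,1), and set Φ_c = I0·(m − 1)/(m·(1 − I0)). Define T : (0, I0] → ℝ by: T(Φ0) = m·(I0 − Φ0)/I0 if Φ0 ≥ 1/m; T(Φ0) = ln(1/Φ0 − (1 − I0)/I0) if Φ_c ≤ Φ0 < 1/m; and T(Φ0) = m − ln(m·Φ0) − (m·(1 − I0)·Φ0 + I0)/I0 if Φ0 < min(1/m, Φ_c). Then T is continuous and strictly decreasing on (0, I0], T(I0) = 0, T(Φ0) → ∞ as Φ0 → 0⁺, and T is a bijection from (0, I0] onto [0, ∞). Consequently, for every game duration t_f ∈ [0, ∞) there is exactly one initial decision potential Φ0 ∈ (0, I0] whose equilibrium trajectory satisfies the terminal condition at time t_f, so the subgame-perfect Nash equilibrium of the SI social-distancing game is unique. -/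

import Mathlib

open Filter

/-- The terminal-time function `T(Φ0)` of the equilibrium trajectory starting at
`(I0, Φ0)`: single-phase full distancing when `Φ0 ≥ 1/m`, single-phase no distancing
when `Φ_c ≤ Φ0 < 1/m` (with `Φ_c = I0 (m-1)/(m (1-I0))`), and two-phase otherwise. -/
noncomputable def Tfun (m I0 Φ0 : ℝ) : ℝ :=
  if 1 / m ≤ Φ0 then m * (I0 - Φ0) / I0
  else if I0 * (m - 1) / (m * (1 - I0)) ≤ Φ0 then
    Real.log (1 / Φ0 - (1 - I0) / I0)
  else m - Real.log (m * Φ0) - (m * (1 - I0) * Φ0 + I0) / I0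

/-- glue strict antitonicity across a junction. -/
lemma antiGlue {f : ℝ → ℝ} {a c b : ℝ} (hac : a < c) (hcb : c ≤ b)
    (h1 : StrictAntiOn f (Set.Ioc a c)) (h2 : StrictAntiOn f (Set.Icc c b)) :
    StrictAntiOn f (Set.Ioc a b) := by
  intro x hx y hy hxy
  rcases le_or_gt y c with hyc | hyc
  · exact h1 ⟨hx.1, hxy.le.trans hyc⟩ ⟨hy.1, hyc⟩ hxy
  · rcases le_or_gt c x with hcx | hcx
    · exact h2 ⟨hcx, hx.2⟩ ⟨hyc.le, hy.2⟩ hxy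
    · exact (h2 ⟨le_refl c, hcb⟩ ⟨hyc.le, hy.2⟩ hyc).trans
        (h1 ⟨hx.1, hcx.le⟩ ⟨hac, le_refl c⟩ hcx)

/-- glue continuity across a junction. -/
lemma contGlue {f g h : ℝ → ℝ} {a c b : ℝ} (hac : a < c) (hcb : c ≤ b)
    (hg : ContinuousOn g (Set.Ioc a c)) (hh : ContinuousOn h (Set.Icc c b))
    (e1 : Set.EqOn f g (Set.Ioc a c)) (e2 : Set.EqOn f h (Set.Icc c b)) :
    ContinuousOn f (Set.Ioc a b) := by
  intro x hx
  rcases lt_trichotomy x c with hxc | hxc | hxc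
  · have hmem : Set.Iio c ∈ nhds x := Iio_mem_nhds hxc
    rw [← continuousWithinAt_inter hmem]
    have hsub : Set.Ioc a b ∩ Set.Iio c ⊆ Set.Ioc a c :=
      fun y hy => ⟨hy.1.1, hy.2.le⟩
    exact (((hg x ⟨hx.1, hxc.le⟩).mono hsub).congr (fun y hy => e1 (hsub hy))
      (e1 ⟨hx.1, hxc.le⟩))
  · subst hxc
    have c1 : ContinuousWithinAt f (Set.Ioc a x) x :=
      (hg x ⟨hac, le_refl x⟩).congr (fun y hy => e1 hy) (e1 ⟨hac, le_refl x⟩)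
    have c2 : ContinuousWithinAt f (Set.Icc x b) x :=
      (hh x ⟨le_refl x, hcb⟩).congr (fun y hy => e2 hy) (e2 ⟨le_refl x, hcb⟩)
    exact (c1.union c2).mono (fun y hy => by
      rcases le_or_gt y x with h' | h'
      · exact Or.inl ⟨hy.1, h'⟩
      · exact Or.inr ⟨h'.le, hy.2⟩)
  · have hmem : Set.Ioi c ∈ nhds x := Ioi_mem_nhds hxc
    rw [← continuousWithinAt_inter hmem]
    have hsub : Set.Ioc a b ∩ Set.Ioi c ⊆ Set.Icc c b :=
      fun y hy => ⟨hy.2.le, hy.1.2⟩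
    exact (((hh x ⟨hxc.le, hx.2⟩).mono hsub).congr (fun y hy => e2 (hsub hy))
      (e2 ⟨hxc.le, hx.2⟩))

/-- From the four analytic facts, deduce the bijection and uniqueness. -/
lemma assemble {f : ℝ → ℝ} {I0 : ℝ} (hI0 : 0 < I0)
    (hc : ContinuousOn f (Set.Ioc 0 I0)) (ha : StrictAntiOn f (Set.Ioc 0 I0))
    (h0 : f I0 = 0) (ht : Tendsto f (nhdsWithin 0 (Set.Ioi 0)) atTop) :
    Set.BijOn f (Set.Ioc 0 I0) (Set.Ici 0) ∧
      ∀ tf : ℝ, 0 ≤ tf → ∃! Φ0, Φ0 ∈ Set.Ioc (0:ℝ) I0 ∧ f Φ0 = tf := by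
  have hI0mem : I0 ∈ Set.Ioc (0:ℝ) I0 := ⟨hI0, le_refl I0⟩
  have hmaps : Set.MapsTo f (Set.Ioc 0 I0) (Set.Ici 0) := by
    intro x hx
    rcases eq_or_lt_of_le hx.2 with h | h
    · simp [h, h0]
    · exact le_of_lt (h0 ▸ ha hx hI0mem h)
  have hsurj : Set.SurjOn f (Set.Ioc 0 I0) (Set.Ici 0) := by
    intro y hy
    have hev : ∀ᶠ x in nhdsWithin 0 (Set.Ioi 0),
        y < f x ∧ x ∈ Set.Ioo (0:ℝ) I0 := by
      refine (ht.eventually_gt_atTop y).and ?_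
      have : Set.Ioo (0:ℝ) I0 ∈ nhdsWithin 0 (Set.Ioi 0) := by
        rw [← Set.Ioi_inter_Iio]
        exact Filter.inter_mem self_mem_nhdsWithin
          (mem_nhdsWithin_of_mem_nhds (Iio_mem_nhds hI0))
      exact this
    obtain ⟨a, hya, ha01⟩ := hev.exists
    have key : Set.Icc (f I0) (f a) ⊆ f '' Set.Icc a I0 :=
      intermediate_value_Icc' ha01.2.le
        (hc.mono (fun z hz => ⟨ha01.1.trans_le hz.1, hz.2⟩))
    have : y ∈ Set.Icc (f I0) (f a) := ⟨h0 ▸ hy, hya.le⟩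
    obtain ⟨x, hx, hfx⟩ := key this
    exact ⟨x, ⟨ha01.1.trans_le hx.1, hx.2⟩, hfx⟩
  have hinj := ha.injOn
  refine ⟨⟨hmaps, hinj, hsurj⟩, ?_⟩
  intro tf htf
  obtain ⟨x, hx, hfx⟩ := hsurj (Set.mem_Ici.mpr htf)
  exact ⟨x, ⟨hx, hfx⟩, fun z ⟨hz, hfz⟩ => hinj hz hx (hfz.trans hfx.symm)⟩

theorem stmt17 (m I0 : ℝ) (hm : 0 < m) (hI0 : I0 ∈ Set.Ioo (0:ℝ) 1) :
    ContinuousOn (Tfun m I0) (Set.Ioc 0 I0) ∧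
    StrictAntiOn (Tfun m I0) (Set.Ioc 0 I0) ∧
    Tfun m I0 I0 = 0 ∧
    Tendsto (Tfun m I0) (nhdsWithin 0 (Set.Ioi 0)) atTop ∧
    Set.BijOn (Tfun m I0) (Set.Ioc 0 I0) (Set.Ici 0) ∧
    ∀ tf : ℝ, 0 ≤ tf → ∃! Φ0, Φ0 ∈ Set.Ioc (0:ℝ) I0 ∧ Tfun m I0 Φ0 = tf := by
  obtain ⟨hI0p, hI01⟩ := hI0
  have h1I0 : (0:ℝ) < 1 - I0 := by linarith
  set T1 : ℝ → ℝ := fun Φ => m * (I0 - Φ) / I0 with hT1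
  set T2 : ℝ → ℝ := fun Φ => Real.log (1 / Φ - (1 - I0) / I0) with hT2
  set T3 : ℝ → ℝ := fun Φ => m - Real.log (m * Φ) - (m * (1 - I0) * Φ + I0) / I0
    with hT3
  -- facts about the pieces
  have argT2 : ∀ Φ ∈ Set.Ioc (0:ℝ) I0, 1 ≤ 1 / Φ - (1 - I0) / I0 := by
    intro Φ hΦ
    have h1 : 1 / I0 ≤ 1 / Φ := by
      apply one_div_le_one_div_of_le hΦ.1 hΦ.2
    have : 1 / I0 - (1 - I0) / I0 = 1 := by field_simp; ring
    linarith
  have T2cont : ContinuousOn T2 (Set.Ioc 0 I0) := by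
    apply ContinuousOn.log
    · exact ContinuousOn.sub (continuousOn_const.div continuousOn_id
        (fun x hx => ne_of_gt hx.1)) continuousOn_const
    · exact fun x hx => by have := argT2 x hx; positivity
  have T2anti : StrictAntiOn T2 (Set.Ioc 0 I0) := by
    intro x hx y hy hxy
    apply Real.log_lt_log
    · have := argT2 y hy; linarith
    · have : 1 / y < 1 / x := one_div_lt_one_div_of_lt hx.1 hxy
      linarith
  have T3cont : ContinuousOn T3 (Set.Ioc 0 I0) := by
    apply ContinuousOn.sub
    apply ContinuousOn.sub continuousOn_const
    · apply ContinuousOn.log (continuousOn_const.mul continuousOn_id)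
      intro x hx
      exact ne_of_gt (mul_pos hm hx.1)
    · exact ContinuousOn.div ((continuousOn_const.mul continuousOn_id).add
        continuousOn_const) continuousOn_const (fun x _ => ne_of_gt hI0p)
  have T3anti : StrictAntiOn T3 (Set.Ioc 0 I0) := by
    intro x hx y hy hxy
    have hlog : Real.log (m * x) < Real.log (m * y) :=
      Real.log_lt_log (mul_pos hm hx.1) (by nlinarith)
    have hlin : (m * (1 - I0) * x + I0) / I0 < (m * (1 - I0) * y + I0) / I0 := by
      apply div_lt_div_of_pos_right ?_ hI0p
      nlinarith [mul_pos (mul_pos hm h1I0) (sub_pos.mpr hxy)]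
    simp only [hT3]
    linarith
  have T1cont : ContinuousOn T1 (Set.Icc (1/m) I0) :=
    ((continuousOn_const.mul (continuousOn_const.sub continuousOn_id)).div
      continuousOn_const (fun x _ => ne_of_gt hI0p))
  have T2tendsto : Tendsto T2 (nhdsWithin 0 (Set.Ioi 0)) atTop := by
    apply Real.tendsto_log_atTop.comp
    have h1 : Tendsto (fun Φ : ℝ => 1 / Φ) (nhdsWithin 0 (Set.Ioi 0)) atTop := by
      simpa [one_div] using tendsto_inv_nhdsGT_zero (𝕜 := ℝ)
    simpa [sub_eq_add_neg] using tendsto_atTop_add_const_right _ (-((1 - I0) / I0)) h1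
  have T3tendsto : Tendsto T3 (nhdsWithin 0 (Set.Ioi 0)) atTop := by
    have hlog : Tendsto (fun Φ : ℝ => -Real.log (m * Φ))
        (nhdsWithin 0 (Set.Ioi 0)) atTop := by
      apply tendsto_neg_atBot_atTop.comp
      apply Real.tendsto_log_nhdsGT_zero.comp
      rw [tendsto_nhdsWithin_iff]
      constructor
      · have h0 : Tendsto (fun Φ : ℝ => m * Φ) (nhdsWithin 0 (Set.Ioi 0))
            (nhds (m * 0)) := (tendsto_id.const_mul m).mono_left nhdsWithin_le_nhds
        simpa using h0
      · filter_upwards [self_mem_nhdsWithin] with Φ hΦ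
        exact mul_pos hm hΦ
    have hrest : Tendsto (fun Φ : ℝ => m - (m * (1 - I0) * Φ + I0) / I0)
        (nhdsWithin 0 (Set.Ioi 0)) (nhds (m - (m * (1 - I0) * 0 + I0) / I0)) := by
      apply Tendsto.mono_left ?_ nhdsWithin_le_nhds
      exact (tendsto_const_nhds.sub (((tendsto_const_nhds.mul tendsto_id).add
        tendsto_const_nhds).div tendsto_const_nhds (ne_of_gt hI0p)))
    have := hlog.atTop_add hrest
    refine this.congr (fun Φ => by simp only [hT3]; ring)
  -- branch resolution facts
  set Φc : ℝ := I0 * (m - 1) / (m * (1 - I0)) with hΦcdef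
  have hdenom : (0:ℝ) < m * (1 - I0) := mul_pos hm h1I0
  rcases le_or_gt 1 (m * I0) with hcase | hcase
  · -- case m*I0 ≥ 1 : pieces T3 on (0, 1/m], T1 on [1/m, I0]
    have hm1 : 1 < m := by nlinarith
    have hmiI : 1 / m ≤ I0 := by rw [div_le_iff₀ hm]; nlinarith
    have hmi0 : (0:ℝ) < 1 / m := by positivity
    have hcΦc : 1 / m ≤ Φc := by
      rw [hΦcdef, div_le_div_iff₀ hm hdenom]; nlinarith
    have e3 : Set.EqOn (Tfun m I0) T3 (Set.Ioc 0 (1/m)) := by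
      intro Φ hΦ
      rcases eq_or_lt_of_le hΦ.2 with h | h
      · -- at the junction point Φ = 1/m the first branch is taken; values agree
        rw [Tfun, if_pos h.ge]
        subst h
        have hmm : m * (1 / m) = 1 := by field_simp
        simp only [hT3, hmm, Real.log_one]
        field_simp
        ring
      · rw [Tfun, if_neg (not_le.mpr h), if_neg (not_le.mpr (h.trans_le hcΦc))]
    have e1 : Set.EqOn (Tfun m I0) T1 (Set.Icc (1/m) I0) := by
      intro Φ hΦ
      rw [Tfun, if_pos hΦ.1]
    have hcont : ContinuousOn (Tfun m I0) (Set.Ioc 0 I0) :=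
      contGlue hmi0 hmiI (T3cont.mono (fun z hz => ⟨hz.1, hz.2.trans hmiI⟩))
        T1cont e3 e1
    have hanti : StrictAntiOn (Tfun m I0) (Set.Ioc 0 I0) := by
      apply antiGlue hmi0 hmiI
      · intro x hx y hy hxy
        rw [e3 hx, e3 hy]
        exact T3anti ⟨hx.1, hx.2.trans hmiI⟩ ⟨hy.1, hy.2.trans hmiI⟩ hxy
      · intro x hx y hy hxy
        rw [e1 hx, e1 hy]
        simp only [hT1]
        apply div_lt_div_of_pos_right ?_ hI0p
        nlinarith
    have hzero : Tfun m I0 I0 = 0 := by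
      rw [e1 ⟨hmiI, le_refl I0⟩]; simp [hT1]
    have htend : Tendsto (Tfun m I0) (nhdsWithin 0 (Set.Ioi 0)) atTop := by
      apply T3tendsto.congr'
      filter_upwards [self_mem_nhdsWithin,
        mem_nhdsWithin_of_mem_nhds (Iio_mem_nhds hmi0)] with Φ h1 h2
      exact (e3 ⟨h1, le_of_lt h2⟩).symm
    obtain ⟨hbij, huniq⟩ := assemble hI0p hcont hanti hzero htend
    exact ⟨hcont, hanti, hzero, htend, hbij, huniq⟩
  · -- case m*I0 < 1
    have hInot1m : ∀ Φ ∈ Set.Ioc (0:ℝ) I0, ¬ (1 / m ≤ Φ) := by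
      intro Φ hΦ
      rw [not_le, lt_div_iff₀ hm]
      nlinarith [hΦ.2]
    rcases le_or_gt m 1 with hmle | hm1
    · -- m ≤ 1 : single piece T2 everywhere
      have hΦcle : Φc ≤ 0 := by
        rw [hΦcdef]
        apply div_nonpos_of_nonpos_of_nonneg ?_ (le_of_lt hdenom)
        nlinarith
      have e2 : Set.EqOn (Tfun m I0) T2 (Set.Ioc 0 I0) := by
        intro Φ hΦ
        rw [Tfun, if_neg (hInot1m Φ hΦ), if_pos (hΦcle.trans hΦ.1.le)]
      have hcont : ContinuousOn (Tfun m I0) (Set.Ioc 0 I0) := T2cont.congr e2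
      have hanti : StrictAntiOn (Tfun m I0) (Set.Ioc 0 I0) := by
        intro x hx y hy hxy
        rw [e2 hx, e2 hy]; exact T2anti hx hy hxy
      have hzero : Tfun m I0 I0 = 0 := by
        rw [e2 ⟨hI0p, le_refl I0⟩]
        have harg1 : 1 / I0 - (1 - I0) / I0 = 1 := by field_simp; ring
        simp only [hT2, harg1, Real.log_one]
      have htend : Tendsto (Tfun m I0) (nhdsWithin 0 (Set.Ioi 0)) atTop := by
        apply T2tendsto.congr'
        filter_upwards [self_mem_nhdsWithin,
          mem_nhdsWithin_of_mem_nhds (Iio_mem_nhds hI0p)] with Φ h1 h2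
        exact (e2 ⟨h1, le_of_lt h2⟩).symm
      obtain ⟨hbij, huniq⟩ := assemble hI0p hcont hanti hzero htend
      exact ⟨hcont, hanti, hzero, htend, hbij, huniq⟩
    · -- 1 < m, m*I0 < 1 : pieces T3 on (0, Φc], T2 on [Φc, I0]
      have hΦcpos : 0 < Φc := by
        rw [hΦcdef]; apply div_pos ?_ hdenom; nlinarith
      have hΦcI0 : Φc ≤ I0 := by
        rw [hΦcdef, div_le_iff₀ hdenom]; nlinarith
      -- junction equality : T3 Φc = T2 Φc
      have hI0ne : I0 ≠ 0 := ne_of_gt hI0p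
      have hmne : m ≠ 0 := ne_of_gt hm
      have h1I0ne : (1:ℝ) - I0 ≠ 0 := ne_of_gt h1I0
      have hm1ne : m - 1 ≠ 0 := ne_of_gt (by linarith)
      have hjunc : T3 Φc = T2 Φc := by
        have hmΦc : m * Φc = I0 * (m - 1) / (1 - I0) := by
          rw [hΦcdef]; field_simp
        have harg : 1 / Φc - (1 - I0) / I0 = (m * Φc)⁻¹ := by
          rw [hmΦc, hΦcdef]
          field_simp
          ring
        have hlin2 : (m * (1 - I0) * Φc + I0) / I0 = m := by
          rw [hΦcdef]; field_simp; ring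
        simp only [hT3, hT2, harg, Real.log_inv, hlin2]
        ring
      have e3 : Set.EqOn (Tfun m I0) T3 (Set.Ioc 0 Φc) := by
        intro Φ hΦ
        rcases eq_or_lt_of_le hΦ.2 with h | h
        · have h1 : ¬ (1 / m ≤ Φ) := hInot1m Φ ⟨hΦ.1, h.le.trans hΦcI0⟩
          have h2 : I0 * (m - 1) / (m * (1 - I0)) ≤ Φ := by
            rw [← hΦcdef, h]
          rw [Tfun, if_neg h1, if_pos h2, h]
          exact hjunc.symm
        · rw [Tfun, if_neg (hInot1m Φ ⟨hΦ.1, h.le.trans hΦcI0⟩),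
            if_neg (not_le.mpr (hΦcdef ▸ h))]
      have e2 : Set.EqOn (Tfun m I0) T2 (Set.Icc Φc I0) := by
        intro Φ hΦ
        rw [Tfun, if_neg (hInot1m Φ ⟨hΦcpos.trans_le hΦ.1, hΦ.2⟩), if_pos hΦ.1]
      have hcont : ContinuousOn (Tfun m I0) (Set.Ioc 0 I0) :=
        contGlue hΦcpos hΦcI0 (T3cont.mono (fun z hz => ⟨hz.1, hz.2.trans hΦcI0⟩))
          (T2cont.mono (fun z hz => ⟨hΦcpos.trans_le hz.1, hz.2⟩)) e3 e2
      have hanti : StrictAntiOn (Tfun m I0) (Set.Ioc 0 I0) := by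
        apply antiGlue hΦcpos hΦcI0
        · intro x hx y hy hxy
          rw [e3 hx, e3 hy]
          exact T3anti ⟨hx.1, hx.2.trans hΦcI0⟩ ⟨hy.1, hy.2.trans hΦcI0⟩ hxy
        · intro x hx y hy hxy
          rw [e2 hx, e2 hy]
          exact T2anti ⟨hΦcpos.trans_le hx.1, hx.2⟩ ⟨hΦcpos.trans_le hy.1, hy.2⟩ hxy
      have hzero : Tfun m I0 I0 = 0 := by
        rw [e2 ⟨hΦcI0, le_refl I0⟩]
        have harg1 : 1 / I0 - (1 - I0) / I0 = 1 := by field_simp; ring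
        simp only [hT2, harg1, Real.log_one]
      have htend : Tendsto (Tfun m I0) (nhdsWithin 0 (Set.Ioi 0)) atTop := by
        apply T3tendsto.congr'
        filter_upwards [self_mem_nhdsWithin,
          mem_nhdsWithin_of_mem_nhds (Iio_mem_nhds hΦcpos)] with Φ h1 h2
        exact (e3 ⟨h1, le_of_lt h2⟩).symm
      obtain ⟨hbij, huniq⟩ := assemble hI0p hcont hanti hzero htend
      exact ⟨hcont, hanti, hzero, htend, hbij, huniq⟩
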